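/- Abel–Cesàro identity for discounted values (the scaled discounted value converges to the average reward): Let (π,P) be unichain and let r : S × A → ℝ. Then for every s ∈ S, lim_{γ→1⁻} (1 − γ) · V(π,P,r,γ)(s) = r̄(π,P,r), the average reward of (π,P,r). -/

import Mathlib

open Filter Finset Topology

noncomputable section

variable {S A : Type} [Fintype S] [DecidableEq S] [Fintype A] [Nonempty S] [Nonempty A]

/-- A policy assigns to each state a probability distribution over actions. -/
def IsPolicy (π : S → A → ℝ) : Prop :=
  (∀ s a, 0 ≤ π s a) ∧ ∀ s, ∑ a, π s a = 1

/-- A transition matrix assigns to each action and state a probability distribution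
over next states. -/
def IsTransition (P : A → S → S → ℝ) : Prop :=
  (∀ a s s', 0 ≤ P a s s') ∧ ∀ a s, ∑ s', P a s s' = 1

/-- The state-transition matrix induced by a policy and a transition matrix. -/
def Mmat (π : S → A → ℝ) (P : A → S → S → ℝ) : Matrix S S ℝ :=
  Matrix.of fun s s' => ∑ a, π s a * P a s s'

/-- Expected one-step reward under policy `π`. -/
def rpi (π : S → A → ℝ) (r : S × A → ℝ) (s : S) : ℝ := ∑ a, π s a * r (s, a)

/-- `(π, P)` is unichain with limiting distribution `μ`: for every `s'`, the Cesàro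
averages of `(M(π,P)^t)(s,s')` converge to `μ s'`, independently of `s`. -/
def Unichain (π : S → A → ℝ) (P : A → S → S → ℝ) (μ : S → ℝ) : Prop :=
  ∀ s s', Tendsto (fun T : ℕ => (∑ t ∈ range T, (Mmat π P ^ t) s s') / (T : ℝ))
    atTop (𝓝 (μ s'))

/-- Discounted value function. -/
def Vval (π : S → A → ℝ) (P : A → S → S → ℝ) (r : S × A → ℝ) (γ : ℝ) (s : S) : ℝ :=
  ∑' t : ℕ, γ ^ t * ((Mmat π P ^ t).mulVec (rpi π r)) s

set_option maxHeartbeats 800000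


lemma weights_hasSum (γ : ℝ) (hγ0 : 0 ≤ γ) (hγ1 : γ < 1) :
    HasSum (fun t : ℕ => (1-γ)^2 * (((t:ℝ)+1) * γ ^ t)) 1 := by
  have hn : ‖γ‖ < 1 := by rwa [Real.norm_eq_abs, abs_of_nonneg hγ0]
  have h1 := hasSum_coe_mul_geometric_of_norm_lt_one hn
  have h2 := hasSum_geometric_of_lt_one hγ0 hγ1
  have h3 := (h1.add h2).mul_left ((1-γ)^2)
  have hne : (1:ℝ) - γ ≠ 0 := by intro h; nlinarith
  have he : (1-γ)^2 * (γ / (1 - γ) ^ 2 + (1 - γ)⁻¹) = 1 := by field_simp; ring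
  rw [he] at h3
  have hf : (fun t : ℕ => (1-γ)^2 * (((t:ℝ)+1) * γ ^ t))
      = fun i : ℕ => (1 - γ) ^ 2 * ((i:ℝ) * γ ^ i + γ ^ i) := by funext t; ring
  rw [hf]; exact h3

lemma abel_of_cesaro (a : ℕ → ℝ) (B : ℝ) (hB : ∀ t, |a t| ≤ B) (L : ℝ)
    (hc : Tendsto (fun T : ℕ => (∑ t ∈ range T, a t) / (T : ℝ)) atTop (𝓝 L)) :
    Tendsto (fun γ : ℝ => (1 - γ) * ∑' t : ℕ, γ ^ t * a t) (𝓝[<] (1:ℝ)) (𝓝 L) := by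
  have hB0 : 0 ≤ B := le_trans (abs_nonneg _) (hB 0)
  set Sn : ℕ → ℝ := fun n => ∑ t ∈ range n, a t with hSn
  set c : ℕ → ℝ := fun n => Sn n / n with hcdef
  have hSb : ∀ n, |Sn n| ≤ n * B := by
    intro n
    calc |Sn n| ≤ ∑ t ∈ range n, |a t| := Finset.abs_sum_le_sum_abs _ _
    _ ≤ ∑ t ∈ range n, B := Finset.sum_le_sum (fun t _ => hB t)
    _ = n * B := by simp [mul_comm]
  have hcb : ∀ n, |c n| ≤ B := by
    intro n
    rcases Nat.eq_zero_or_pos n with h | h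
    · simp [hcdef, h, hB0]
    · have hn : (0:ℝ) < n := by exact_mod_cast h
      rw [hcdef, abs_div, abs_of_nonneg hn.le, div_le_iff₀ hn]
      calc |Sn n| ≤ n * B := hSb n
      _ = B * n := by ring
  -- summability facts for 0 ≤ γ < 1
  have hsum1 : ∀ γ : ℝ, 0 ≤ γ → γ < 1 → Summable (fun t : ℕ => γ ^ t * a t) := by
    intro γ hγ0 hγ1
    apply Summable.of_norm_bounded (g := fun t => B * γ ^ t)
      ((summable_geometric_of_lt_one hγ0 hγ1).mul_left B)
    intro t
    rw [Real.norm_eq_abs, abs_mul, abs_pow, abs_of_nonneg hγ0, mul_comm]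
    exact mul_le_mul_of_nonneg_right (hB t) (pow_nonneg hγ0 t)
  have hsumlin : ∀ γ : ℝ, 0 ≤ γ → γ < 1 → Summable (fun t : ℕ => ((t:ℝ)+1) * γ ^ t) :=
    fun γ hγ0 hγ1 => (weights_hasSum γ hγ0 hγ1).summable.mul_left ((1-γ)^2)⁻¹ |>.congr
      (by intro t
          have hne : ((1:ℝ)-γ)^2 ≠ 0 := pow_ne_zero _ (by intro h; nlinarith)
          have hne1 : (1:ℝ)-γ ≠ 0 := by intro h; nlinarith
          field_simp)
  have hsumS1 : ∀ γ : ℝ, 0 ≤ γ → γ < 1 → Summable (fun t : ℕ => γ ^ t * Sn (t+1)) := by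
    intro γ hγ0 hγ1
    apply Summable.of_norm_bounded (g := fun t : ℕ => B * (((t:ℝ)+1) * γ ^ t))
      ((hsumlin γ hγ0 hγ1).mul_left B)
    intro t
    rw [Real.norm_eq_abs, abs_mul, abs_pow, abs_of_nonneg hγ0]
    calc γ ^ t * |Sn (t+1)| ≤ γ ^ t * (((t:ℝ)+1) * B) := by
          apply mul_le_mul_of_nonneg_left _ (pow_nonneg hγ0 t)
          simpa using hSb (t+1)
    _ = B * (((t:ℝ)+1) * γ ^ t) := by ring
  have hsumS0 : ∀ γ : ℝ, 0 ≤ γ → γ < 1 → Summable (fun t : ℕ => γ ^ t * Sn t) := by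
    intro γ hγ0 hγ1
    apply Summable.of_norm_bounded (g := fun t : ℕ => B * (((t:ℝ)+1) * γ ^ t))
      ((hsumlin γ hγ0 hγ1).mul_left B)
    intro t
    rw [Real.norm_eq_abs, abs_mul, abs_pow, abs_of_nonneg hγ0]
    calc γ ^ t * |Sn t| ≤ γ ^ t * (((t:ℝ)+1) * B) := by
          apply mul_le_mul_of_nonneg_left _ (pow_nonneg hγ0 t)
          calc |Sn t| ≤ (t:ℝ) * B := hSb t
          _ ≤ ((t:ℝ)+1) * B := by nlinarith
    _ = B * (((t:ℝ)+1) * γ ^ t) := by ring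
  -- key identity
  have key : ∀ γ : ℝ, 0 ≤ γ → γ < 1 →
      (1 - γ) * ∑' t : ℕ, γ ^ t * a t
        = ∑' t : ℕ, ((1-γ)^2 * (((t:ℝ)+1) * γ ^ t)) * c (t+1) := by
    intro γ hγ0 hγ1
    have hshift : ∑' t : ℕ, γ ^ t * Sn t = γ * ∑' t : ℕ, γ ^ t * Sn (t+1) := by
      rw [Summable.tsum_eq_zero_add (hsumS0 γ hγ0 hγ1)]
      have : ∀ n : ℕ, γ ^ (n+1) * Sn (n+1) = γ * (γ ^ n * Sn (n+1)) := by
        intro n; ring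
      simp only [this]
      rw [tsum_mul_left]
      simp [hSn]
    have hstep : ∑' t : ℕ, γ ^ t * a t = (1 - γ) * ∑' t : ℕ, γ ^ t * Sn (t+1) := by
      have hae : ∀ t : ℕ, γ ^ t * a t = γ ^ t * Sn (t+1) - γ ^ t * Sn t := by
        intro t
        have : Sn (t+1) = Sn t + a t := Finset.sum_range_succ a t
        rw [this]; ring
      calc ∑' t : ℕ, γ ^ t * a t
          = ∑' t : ℕ, (γ ^ t * Sn (t+1) - γ ^ t * Sn t) := by
            exact tsum_congr hae
      _ = (∑' t : ℕ, γ ^ t * Sn (t+1)) - ∑' t : ℕ, γ ^ t * Sn t :=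
            Summable.tsum_sub (hsumS1 γ hγ0 hγ1) (hsumS0 γ hγ0 hγ1)
      _ = (1 - γ) * ∑' t : ℕ, γ ^ t * Sn (t+1) := by rw [hshift]; ring
    rw [hstep]
    rw [← mul_assoc]
    have h2 : (1-γ) * (1-γ) = (1-γ)^2 := by ring
    rw [h2, ← tsum_mul_left]
    apply tsum_congr
    intro t
    have hne : ((t:ℝ)+1) ≠ 0 := by positivity
    have : c (t+1) = Sn (t+1) / ((t:ℝ)+1) := by
      simp [hcdef]
    rw [this]
    field_simp
  -- the limit
  rw [Metric.tendsto_nhdsWithin_nhds]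
  intro ε hε
  obtain ⟨N, hN⟩ := (Metric.tendsto_atTop.mp hc) (ε/4) (by linarith)
  set C : ℝ := ∑ t ∈ range N, (((t:ℝ)+1) * |c (t+1) - L|) with hCdef
  have hC0 : 0 ≤ C := Finset.sum_nonneg (fun t _ => by positivity)
  refine ⟨min 1 (ε / (2*(C+1))), by positivity, ?_⟩
  intro γ hγlt hγd
  have hγ1 : γ < 1 := hγlt
  have hd : dist γ 1 = 1 - γ := by
    rw [Real.dist_eq, abs_of_nonpos (by linarith)]; ring
  rw [hd] at hγd
  have h1γa : 1 - γ < 1 := lt_of_lt_of_le hγd (min_le_left _ _)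
  have h1γb : 1 - γ < ε / (2*(C+1)) := lt_of_lt_of_le hγd (min_le_right _ _)
  have hγ0 : 0 ≤ γ := by linarith
  rw [Real.dist_eq, key γ hγ0 hγ1]
  set w : ℕ → ℝ := fun t => (1-γ)^2 * (((t:ℝ)+1) * γ ^ t) with hwdef
  have hw0 : ∀ t, 0 ≤ w t := by
    intro t
    apply mul_nonneg (sq_nonneg _)
    exact mul_nonneg (by positivity) (pow_nonneg hγ0 t)
  have hws : HasSum w 1 := weights_hasSum γ hγ0 hγ1
  have hD : ∀ t : ℕ, |c (t+1) - L| ≤ B + |L| := by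
    intro t
    calc |c (t+1) - L| ≤ |c (t+1)| + |L| := abs_sub _ _
    _ ≤ B + |L| := by have := hcb (t+1); linarith
  have hsn : Summable (fun t : ℕ => w t * |c (t+1) - L|) := by
    apply Summable.of_nonneg_of_le (fun t => by positivity)
      (fun t => mul_le_mul_of_nonneg_left (hD t) (hw0 t))
    exact hws.summable.mul_right (B + |L|)
  have hsc : Summable (fun t : ℕ => w t * c (t+1)) := by
    apply Summable.of_norm_bounded (g := fun t : ℕ => w t * (B + |L|))
      (hws.summable.mul_right (B + |L|))
    intro t
    rw [Real.norm_eq_abs, abs_mul, abs_of_nonneg (hw0 t)]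
    apply mul_le_mul_of_nonneg_left _ (hw0 t)
    have := hcb (t+1); have := hD t
    calc |c (t+1)| ≤ B := hcb (t+1)
    _ ≤ B + |L| := by linarith [abs_nonneg L]
  have hdiff : (∑' t : ℕ, w t * c (t+1)) - L = ∑' t : ℕ, w t * (c (t+1) - L) := by
    have h1 : ∑' t : ℕ, w t * (c (t+1) - L)
        = (∑' t : ℕ, w t * c (t+1)) - ∑' t : ℕ, w t * L := by
      rw [← Summable.tsum_sub hsc (hws.summable.mul_right L)]
      apply tsum_congr; intro t; ring
    have h2 : ∑' t : ℕ, w t * L = L := by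
      rw [tsum_mul_right, hws.tsum_eq, one_mul]
    rw [h1, h2]
  rw [hdiff]
  have habs : |∑' t : ℕ, w t * (c (t+1) - L)| ≤ ∑' t : ℕ, w t * |c (t+1) - L| := by
    have := norm_tsum_le_tsum_norm (f := fun t : ℕ => w t * (c (t+1) - L)) ?_
    · simpa [Real.norm_eq_abs, abs_mul, abs_of_nonneg (hw0 _)] using this
    · apply hsn.congr
      intro t
      rw [Real.norm_eq_abs, abs_mul, abs_of_nonneg (hw0 t)]
  have hsplit := Summable.sum_add_tsum_nat_add N hsn
  -- head bound
  have hhead : ∑ t ∈ range N, w t * |c (t+1) - L| ≤ (1-γ) * C := by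
    have step : ∀ t ∈ range N, w t * |c (t+1) - L|
        ≤ (1-γ) * (((t:ℝ)+1) * |c (t+1) - L|) := by
      intro t _
      have hp : γ ^ t ≤ 1 := pow_le_one₀ hγ0 hγ1.le
      have h2 : (1-γ)^2 ≤ (1-γ) := by nlinarith
      calc w t * |c (t+1) - L| = (1-γ)^2 * (γ ^ t * (((t:ℝ)+1) * |c (t+1) - L|)) := by
            rw [hwdef]; ring
      _ ≤ (1-γ)^2 * (1 * (((t:ℝ)+1) * |c (t+1) - L|)) := by
            apply mul_le_mul_of_nonneg_left _ (sq_nonneg _)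
            apply mul_le_mul_of_nonneg_right hp (by positivity)
      _ = (1-γ)^2 * (((t:ℝ)+1) * |c (t+1) - L|) := by ring
      _ ≤ (1-γ) * (((t:ℝ)+1) * |c (t+1) - L|) := by
            apply mul_le_mul_of_nonneg_right h2 (by positivity)
    calc ∑ t ∈ range N, w t * |c (t+1) - L|
        ≤ ∑ t ∈ range N, (1-γ) * (((t:ℝ)+1) * |c (t+1) - L|) := Finset.sum_le_sum step
    _ = (1-γ) * C := by rw [hCdef, Finset.mul_sum]
  -- tail bound
  have htail : ∑' t : ℕ, w (t+N) * |c (t+N+1) - L| ≤ ε/4 := by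
    have hsn' : Summable (fun t : ℕ => w (t+N) * |c (t+N+1) - L|) :=
      (summable_nat_add_iff N).mpr hsn
    have hwN : Summable (fun t : ℕ => w (t+N)) := (summable_nat_add_iff N).mpr hws.summable
    have hb : ∀ t : ℕ, w (t+N) * |c (t+N+1) - L| ≤ w (t+N) * (ε/4) := by
      intro t
      apply mul_le_mul_of_nonneg_left _ (hw0 _)
      have := hN (t+N+1) (by omega)
      rw [Real.dist_eq] at this
      linarith
    calc ∑' t : ℕ, w (t+N) * |c (t+N+1) - L|
        ≤ ∑' t : ℕ, w (t+N) * (ε/4) := Summable.tsum_le_tsum hb hsn' (hwN.mul_right _)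
    _ = (∑' t : ℕ, w (t+N)) * (ε/4) := tsum_mul_right
    _ ≤ 1 * (ε/4) := by
          apply mul_le_mul_of_nonneg_right _ (by linarith)
          have h := Summable.sum_add_tsum_nat_add N hws.summable
          rw [hws.tsum_eq] at h
          have hnn : 0 ≤ ∑ t ∈ range N, w t := Finset.sum_nonneg (fun t _ => hw0 t)
          linarith
    _ = ε/4 := one_mul _
  have hC2 : (1-γ) * C < ε/2 := by
    have h1 : 0 ≤ 1 - γ := by linarith
    have h2 : (1-γ) * C ≤ (ε / (2*(C+1))) * C :=
      mul_le_mul_of_nonneg_right h1γb.le hC0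
    have hlt : (ε / (2*(C+1))) * C < ε/2 := by
      rw [div_mul_eq_mul_div, div_lt_iff₀ (by positivity)]
      have he : ε/2 * (2*(C+1)) = ε*C + ε := by ring
      rw [he]
      linarith
    linarith [h2]
  calc |∑' t : ℕ, w t * (c (t+1) - L)| ≤ ∑' t : ℕ, w t * |c (t+1) - L| := habs
  _ = (∑ t ∈ range N, w t * |c (t+1) - L|) + ∑' t : ℕ, w (t+N) * |c (t+N+1) - L| := hsplit.symm
  _ ≤ (1-γ) * C + ε/4 := add_le_add hhead htail
  _ < ε/2 + ε/4 := by linarith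
  _ < ε := by linarith


lemma Mpow_stoch {S A : Type} [Fintype S] [DecidableEq S] [Fintype A]
    (π : S → A → ℝ) (P : A → S → S → ℝ) (hπ : IsPolicy π) (hP : IsTransition P) (t : ℕ) :
    (∀ s s', 0 ≤ (Mmat π P ^ t) s s') ∧ ∀ s, ∑ s', (Mmat π P ^ t) s s' = 1 := by
  have hM0 : ∀ s s', 0 ≤ Mmat π P s s' := by
    intro s s'
    exact Finset.sum_nonneg (fun a _ => mul_nonneg (hπ.1 s a) (hP.1 a s s'))
  have hM1 : ∀ s, ∑ s', Mmat π P s s' = 1 := by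
    intro s
    show ∑ s', ∑ a, π s a * P a s s' = 1
    rw [Finset.sum_comm]
    calc ∑ a, ∑ s', π s a * P a s s' = ∑ a, π s a * ∑ s', P a s s' := by
          simp [Finset.mul_sum]
    _ = ∑ a, π s a := by
          apply Finset.sum_congr rfl; intro a _; rw [hP.2 a s, mul_one]
    _ = 1 := hπ.2 s
  induction t with
  | zero =>
    constructor
    · intro s s'
      by_cases h : s = s' <;> simp [Matrix.one_apply, h]
    · intro s; simp [Matrix.one_apply]
  | succ t ih =>
    have hpow : Mmat π P ^ (t+1) = (Mmat π P ^ t) * Mmat π P := pow_succ _ _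
    constructor
    · intro s s'
      rw [hpow]
      exact Finset.sum_nonneg (fun k _ => mul_nonneg (ih.1 s k) (hM0 k s'))
    · intro s
      rw [hpow]
      show ∑ s', ∑ k, (Mmat π P ^ t) s k * Mmat π P k s' = 1
      rw [Finset.sum_comm]
      calc ∑ k, ∑ s', (Mmat π P ^ t) s k * Mmat π P k s'
          = ∑ k, (Mmat π P ^ t) s k * ∑ s', Mmat π P k s' := by simp [Finset.mul_sum]
      _ = ∑ k, (Mmat π P ^ t) s k := by
          apply Finset.sum_congr rfl; intro k _; rw [hM1 k, mul_one]
      _ = 1 := ih.2 s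

/-- **Abel–Cesàro identity for discounted values.** For a unichain pair `(π,P)` and any
reward `r`, for every state `s`, `lim_{γ→1⁻} (1 − γ)·V(π,P,r,γ)(s) = r̄(π,P,r)`,
the average reward. -/
theorem scaled_discounted_value_tendsto_average_reward
    (π : S → A → ℝ) (P : A → S → S → ℝ)
    (hπ : IsPolicy π) (hP : IsTransition P)
    (μ : S → ℝ) (huni : Unichain π P μ)
    (r : S × A → ℝ) (s : S) :
    Tendsto (fun γ : ℝ => (1 - γ) * Vval π P r γ s) (𝓝[<] (1 : ℝ))
      (𝓝 (∑ s', μ s' * rpi π r s')) := by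
  set a : ℕ → ℝ := fun t => ((Mmat π P ^ t).mulVec (rpi π r)) s with hadef
  have hVa : ∀ γ : ℝ, Vval π P r γ s = ∑' t : ℕ, γ ^ t * a t := fun γ => rfl
  set B : ℝ := ∑ s', |rpi π r s'| with hBdef
  have hB : ∀ t, |a t| ≤ B := by
    intro t
    obtain ⟨hpos, hrow⟩ := Mpow_stoch π P hπ hP t
    have hle1 : ∀ s', (Mmat π P ^ t) s s' ≤ 1 := by
      intro s'
      calc (Mmat π P ^ t) s s' ≤ ∑ k, (Mmat π P ^ t) s k :=
            Finset.single_le_sum (fun k _ => hpos s k) (Finset.mem_univ s')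
      _ = 1 := hrow s
    calc |a t| = |∑ s', (Mmat π P ^ t) s s' * rpi π r s'| := by
          simp [hadef, Matrix.mulVec, dotProduct]
    _ ≤ ∑ s', |(Mmat π P ^ t) s s' * rpi π r s'| := Finset.abs_sum_le_sum_abs _ _
    _ ≤ ∑ s', |rpi π r s'| := by
          apply Finset.sum_le_sum
          intro s' _
          rw [abs_mul, abs_of_nonneg (hpos s s')]
          have := abs_nonneg (rpi π r s')
          nlinarith [hle1 s', hpos s s']
    _ = B := rfl
  have hc : Tendsto (fun T : ℕ => (∑ t ∈ range T, a t) / (T : ℝ)) atTop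
      (𝓝 (∑ s', μ s' * rpi π r s')) := by
    have heq : ∀ T : ℕ, (∑ t ∈ range T, a t) / (T : ℝ)
        = ∑ s', ((∑ t ∈ range T, (Mmat π P ^ t) s s') / (T : ℝ)) * rpi π r s' := by
      intro T
      have h1 : (∑ t ∈ range T, a t)
          = ∑ s', (∑ t ∈ range T, (Mmat π P ^ t) s s') * rpi π r s' := by
        simp only [hadef, Matrix.mulVec, dotProduct]
        rw [Finset.sum_comm]
        simp [Finset.sum_mul]
      rw [h1, Finset.sum_div]
      apply Finset.sum_congr rfl
      intro s' _
      rw [div_mul_eq_mul_div]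
    simp only [heq]
    exact tendsto_finset_sum _ (fun s' _ => (huni s s').mul_const (rpi π r s'))
  have := abel_of_cesaro a B hB _ hc
  simpa only [hVa] using this
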